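/- Let p ∈ (0,1), q ∈ (0,1) with q > p, and v̄ ≥ 2W > 0. Define β = q/p > 1 and for integer t ≥ 1, h(t) = v̄·(t·β^t/(β^t - 1) - 1/(β-1)) - W·t. Then h is increasing in t (as a real function of t > 0). -/

import Mathlib

open Set

lemma key_log (u : ℝ) (hu : 1 < u) : 2 * u * Real.log u < u ^ 2 - 1 := by
  have h0 : StrictMonoOn (fun u : ℝ => u ^ 2 - 1 - 2 * u * Real.log u) (Ici 1) := by
    apply strictMonoOn_of_deriv_pos (convex_Ici 1)
    · have hlog : ContinuousOn Real.log (Ici (1:ℝ)) := by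
        apply Real.continuousOn_log.mono
        intro x hx
        simp only [mem_Ici] at hx
        simp only [mem_compl_iff, mem_singleton_iff]
        intro hx0
        rw [hx0] at hx; norm_num at hx
      exact ((continuousOn_id.pow 2).sub continuousOn_const).sub
        ((continuousOn_const.mul continuousOn_id).mul hlog)
    · intro x hx
      rw [interior_Ici] at hx
      have hx0 : (0:ℝ) < x := lt_trans one_pos hx
      have h1 : HasDerivAt (fun u : ℝ => u ^ 2 - 1 - 2 * u * Real.log u)
          (2 * x - (2 * Real.log x + 2)) x := by
        have hl : HasDerivAt Real.log x⁻¹ x := Real.hasDerivAt_log (ne_of_gt hx0)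
        have h2 : HasDerivAt (fun u : ℝ => 2 * u * Real.log u)
            (2 * Real.log x + 2) x := by
          have := ((hasDerivAt_id x).const_mul 2).mul hl
          rw [show 2 * Real.log x + 2 = 2 * 1 * Real.log x + 2 * id x * x⁻¹ by
            simp only [id]; field_simp]
          exact this
        have h3 : HasDerivAt (fun u : ℝ => u ^ 2 - 1) (2 * x) x := by
          simpa using ((hasDerivAt_pow 2 x).sub_const 1)
        exact h3.sub h2
      rw [h1.deriv]
      have := Real.log_lt_sub_one_of_pos hx0 (ne_of_gt hx)
      linarith
  have := h0 self_mem_Ici (le_of_lt hu) hu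
  simp only [Real.log_one] at this
  nlinarith

theorem stmt_10 (p q W v : ℝ) (hp : p ∈ Ioo (0:ℝ) 1) (hq : q ∈ Ioo (0:ℝ) 1)
    (hqp : p < q) (hW : 0 < W) (hv : 2 * W ≤ v)
    (β : ℝ) (hβ : β = q / p)
    (h : ℝ → ℝ)
    (hh : ∀ t, h t = v * (t * β ^ t / (β ^ t - 1) - 1 / (β - 1)) - W * t) :
    StrictMonoOn h (Ioi (0:ℝ)) := by
  have hβ1 : 1 < β := by rw [hβ]; exact (one_lt_div hp.1).2 hqp
  have hβ0 : 0 < β := lt_trans one_pos hβ1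
  set L := Real.log β with hL
  have hder : ∀ t ∈ Ioi (0:ℝ), HasDerivAt h
      (v * (((1 * β ^ t + t * (β ^ t * L)) * (β ^ t - 1) - t * β ^ t * (β ^ t * L)) /
        (β ^ t - 1) ^ 2) - W * 1) t := by
    intro t ht
    simp only [mem_Ioi] at ht
    have hu1 : 1 < β ^ t := (Real.one_lt_rpow_iff_of_pos hβ0).2 (Or.inl ⟨hβ1, ht⟩)
    have hne : β ^ t - 1 ≠ 0 := by linarith
    have d1 : HasDerivAt (fun s : ℝ => β ^ s) (β ^ t * L) t :=
      (Real.hasStrictDerivAt_const_rpow hβ0 t).hasDerivAt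
    have d2 : HasDerivAt (fun s : ℝ => s * β ^ s) (1 * β ^ t + t * (β ^ t * L)) t :=
      (hasDerivAt_id t).mul d1
    have d3 : HasDerivAt (fun s : ℝ => β ^ s - 1) (β ^ t * L) t := d1.sub_const 1
    have d4 := d2.div d3 hne
    have d5 := (d4.sub_const (1 / (β - 1))).const_mul v
    have d6 := d5.sub ((hasDerivAt_id t).const_mul W)
    have heq : h = fun s : ℝ =>
        v * (s * β ^ s / (β ^ s - 1) - 1 / (β - 1)) - W * s := funext hh
    rw [heq]
    exact d6
  apply strictMonoOn_of_deriv_pos (convex_Ioi 0)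
  · exact fun t ht => (hder t ht).differentiableAt.continuousAt.continuousWithinAt
  · intro t ht
    rw [interior_Ioi] at ht
    rw [(hder t ht).deriv]
    simp only [mem_Ioi] at ht
    have hu1 : 1 < β ^ t := (Real.one_lt_rpow_iff_of_pos hβ0).2 (Or.inl ⟨hβ1, ht⟩)
    set u := β ^ t with hu
    have htL : t * L = Real.log u := (Real.log_rpow hβ0 t).symm
    have hx2 : (0:ℝ) < (u - 1) ^ 2 := by nlinarith
    have hkey := key_log u hu1
    have hN : ((1 * u + t * (u * L)) * (u - 1) - t * u * (u * L))
        = u * (u - 1 - Real.log u) := by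
      have : t * (u * L) = u * Real.log u := by rw [← htL]; ring
      have h2 : t * u * (u * L) = u * (u * Real.log u) := by
        rw [mul_comm t u, mul_assoc, this]
      nlinarith [this, h2]
    rw [hN]
    have hNpos : (u - 1) ^ 2 < 2 * (u * (u - 1 - Real.log u)) := by nlinarith
    have hr : 1 / 2 < u * (u - 1 - Real.log u) / (u - 1) ^ 2 := by
      rw [lt_div_iff₀ hx2]; linarith
    have hv0 : 0 < v := by linarith
    nlinarith [mul_lt_mul_of_pos_left hr hv0]
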